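/- Let b ≥ 2 and r ≥ 1 be integers, and let n be an integer with n ≥ b^r − 1. Then the sum of the base-b digits of n! satisfies s_b(n!) ≥ (b−1)·r. -/

import Mathlib

-- digit sum recursion
lemma sumdig_rec {b : ℕ} (hb : 2 ≤ b) (n : ℕ) :
    (Nat.digits b n).sum = n % b + (Nat.digits b (n / b)).sum := by
  rcases Nat.eq_zero_or_pos n with rfl | hn
  · simp
  · rw [Nat.digits_def' (by omega : 1 < b) hn]; simp

lemma sumdig_mul_add {b : ℕ} (hb : 2 ≤ b) (X u : ℕ) (hu : u < b) :
    (Nat.digits b (b * X + u)).sum = u + (Nat.digits b X).sum := by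
  rw [sumdig_rec hb, Nat.mul_add_mod, Nat.mod_eq_of_lt hu,
    Nat.mul_add_div (by omega), Nat.div_eq_of_lt hu, add_zero]

lemma sumdig_small {b : ℕ} (hb : 2 ≤ b) (u : ℕ) (hu : u < b) :
    (Nat.digits b u).sum = u := by
  rw [sumdig_rec hb, Nat.mod_eq_of_lt hu, Nat.div_eq_of_lt hu]
  simp

-- subadditivity of digit sum
lemma sumdig_subadd {b : ℕ} (hb : 2 ≤ b) :
    ∀ n x y : ℕ, x + y = n →
      (Nat.digits b n).sum ≤ (Nat.digits b x).sum + (Nat.digits b y).sum := by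
  intro n
  induction n using Nat.strong_induction_on with
  | _ n ih =>
    intro x y hxy
    rcases Nat.eq_zero_or_pos n with rfl | hn
    · obtain ⟨rfl, rfl⟩ : x = 0 ∧ y = 0 := by omega
      simp
    obtain ⟨X, u, hub, hx⟩ : ∃ X u, u < b ∧ x = b * X + u :=
      ⟨x / b, x % b, Nat.mod_lt _ (by omega), (Nat.div_add_mod x b).symm⟩
    obtain ⟨Y, v, hvb, hy⟩ : ∃ Y v, v < b ∧ y = b * Y + v :=
      ⟨y / b, y % b, Nat.mod_lt _ (by omega), (Nat.div_add_mod y b).symm⟩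
    obtain ⟨c, w, hwb, hc1, huv⟩ : ∃ c w, w < b ∧ c ≤ 1 ∧ u + v = b * c + w := by
      refine ⟨(u + v) / b, (u + v) % b, Nat.mod_lt _ (by omega), ?_,
        (Nat.div_add_mod (u + v) b).symm⟩
      apply Nat.lt_succ_iff.mp
      apply Nat.div_lt_of_lt_mul
      omega
    have hn' : n = b * (X + Y + c) + w := by
      rw [← hxy, hx, hy]; ring_nf; omega
    have hSn : (Nat.digits b n).sum = w + (Nat.digits b (X + Y + c)).sum := by
      rw [hn']; exact sumdig_mul_add hb _ _ hwb
    have hSx : (Nat.digits b x).sum = u + (Nat.digits b X).sum := by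
      rw [hx]; exact sumdig_mul_add hb _ _ hub
    have hSy : (Nat.digits b y).sum = v + (Nat.digits b Y).sum := by
      rw [hy]; exact sumdig_mul_add hb _ _ hvb
    have hmul : 2 * (X + Y + c) ≤ b * (X + Y + c) := Nat.mul_le_mul_right _ hb
    have hlt1 : X + Y + c < n := by omega
    have hlt2 : X + Y < n := by omega
    have ih1 := ih _ hlt1 (X + Y) c rfl
    have ih2 := ih _ hlt2 X Y rfl
    have hsc : (Nat.digits b c).sum = c := sumdig_small hb c (by omega)
    have hbc : c ≤ b * c := Nat.le_mul_of_pos_left c (by omega)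
    omega

-- digit sum of b^r - 1
lemma sumdig_pow_sub_one {b : ℕ} (hb : 2 ≤ b) (r : ℕ) :
    (Nat.digits b (b ^ r - 1)).sum = (b - 1) * r := by
  induction r with
  | zero => simp
  | succ r ih =>
    have hbp : 1 ≤ b ^ r := Nat.one_le_pow _ _ (by omega)
    have hpow : b ^ (r + 1) = b * b ^ r := by ring
    have hmul : b * (b ^ r - 1) = b * b ^ r - b := by
      rw [Nat.mul_sub, mul_one]
    have hle : b ≤ b * b ^ r := Nat.le_mul_of_pos_right b (by omega)
    have heq : b ^ (r + 1) - 1 = b * (b ^ r - 1) + (b - 1) := by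
      rw [hpow, hmul]; omega
    rw [heq, sumdig_mul_add hb _ _ (by omega : b - 1 < b), ih, Nat.mul_succ]
    omega

-- splitting: s < b^r, q > 0
lemma sumdig_split {b r : ℕ} (hb : 2 ≤ b) {s q : ℕ} (hs : s < b ^ r) (hq : 0 < q) :
    (Nat.digits b (s + b ^ r * q)).sum = (Nat.digits b s).sum + (Nat.digits b q).sum := by
  have hlen : (Nat.digits b s).length ≤ r := by
    rcases Nat.eq_zero_or_pos s with rfl | hs0
    · simp
    · rw [Nat.digits_len b s (by omega) (by omega)]
      have := (Nat.log_lt_iff_lt_pow (by omega : 1 < b) (by omega : s ≠ 0)).mpr hs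
      omega
  have := Nat.digits_append_zeroes_append_digits (b := b) (k := r - (Nat.digits b s).length)
    (m := q) (n := s) (by omega : 1 < b) hq
  have hrr : (Nat.digits b s).length + (r - (Nat.digits b s).length) = r := by omega
  rw [hrr] at this
  rw [← this]
  simp

lemma key {b r : ℕ} (hb : 2 ≤ b) (hr : 1 ≤ r) :
    ∀ N : ℕ, 0 < N → (b ^ r - 1) ∣ N → (b - 1) * r ≤ (Nat.digits b N).sum := by
  intro N
  induction N using Nat.strong_induction_on with
  | _ N ih =>
    intro hN hdvd
    have hbp : 2 ≤ b ^ r := by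
      calc 2 ≤ b := hb
      _ = b ^ 1 := (pow_one b).symm
      _ ≤ b ^ r := Nat.pow_le_pow_right (by omega) hr
    rcases Nat.lt_or_ge N (b ^ r) with hlt | hge
    · -- N = b^r - 1
      obtain ⟨k, hk⟩ := hdvd
      have hk1 : k = 1 := by
        by_contra hne
        have hk0 : k ≠ 0 := by rintro rfl; rw [mul_zero] at hk; omega
        have h2 : (b ^ r - 1) * 2 ≤ (b ^ r - 1) * k :=
          Nat.mul_le_mul_left _ (by omega)
        omega
      rw [hk, hk1, mul_one, sumdig_pow_sub_one hb]
    · have hdm := Nat.div_add_mod N (b ^ r)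
      obtain ⟨q, s, hq, hs, hNe⟩ : ∃ q s, 0 < q ∧ s < b ^ r ∧ N = s + b ^ r * q :=
        ⟨N / b ^ r, N % b ^ r, Nat.div_pos hge (by omega), Nat.mod_lt _ (by omega), by omega⟩
      have hmul : (b ^ r - 1) * q = b ^ r * q - q := by
        rw [Nat.sub_mul, one_mul]
      have hle : q ≤ b ^ r * q := Nat.le_mul_of_pos_left q (by omega)
      have heq : N - (b ^ r - 1) * q = q + s := by rw [hmul]; omega
      have hdvd' : (b ^ r - 1) ∣ (q + s) :=
        heq ▸ Nat.dvd_sub hdvd (dvd_mul_right _ _)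
      have h2q : 2 * q ≤ b ^ r * q := Nat.mul_le_mul_right _ hbp
      have hlt : q + s < N := by omega
      have hpos : 0 < q + s := by omega
      have ihqs := ih _ hlt hpos hdvd'
      have hsub := sumdig_subadd hb (q + s) q s rfl
      have hsplit := sumdig_split hb hs hq
      rw [hNe, hsplit]
      omega

theorem stmt_8 (b r n : ℕ) (hb : 2 ≤ b) (hr : 1 ≤ r)
    (hn : n ≥ b ^ r - 1) :
    (Nat.digits b (Nat.factorial n)).sum ≥ (b - 1) * r := by
  have hbp : 2 ≤ b ^ r := by
    calc 2 ≤ b := hb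
    _ = b ^ 1 := (pow_one b).symm
    _ ≤ b ^ r := Nat.pow_le_pow_right (by omega) hr
  have hdvd : (b ^ r - 1) ∣ Nat.factorial n :=
    Nat.dvd_factorial (by omega) hn
  exact key hb hr _ (Nat.factorial_pos n) hdvd
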